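/- arXiv:2205.07189 — 2 statements merged into one kernel-verified Lean document; each statement's English description precedes it below -/
import Mathlib

section
/- Let n ≥ 3 and let C_n be the cycle on n vertices. Then χ_{vi,1}(C_n) = 6 if n = 3; χ_{vi,1}(C_n) = 4 if n ≡ 0 (mod 4); and χ_{vi,1}(C_n) = 5 otherwise. -/
open SimpleGraph

variable {V : Type*}

/-- An *incidence* of `G`: a pair `(v, e)` where `e` is an edge of `G` and `v ∈ e`. -/
abbrev Inc (G : SimpleGraph V) : Type _ :=
  {p : V × Sym2 V // p.2 ∈ G.edgeSet ∧ p.1 ∈ p.2}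

/-- The elements to be colored in a vi-simultaneous coloring: vertices together with
incidences. -/
abbrev VIElem (G : SimpleGraph V) : Type _ := V ⊕ Inc G

/-- Adjacency between elements of `V(G) ∪ I(G)`: two vertices are adjacent when they are
adjacent in `G`; a vertex `u` and an incidence `(w, f)` are adjacent when `u ∈ f`; two
distinct incidences `(v, e)`, `(w, f)` are adjacent when `v = w`, or `e = f`, or
`{v, w} = e`, or `{v, w} = f`. -/
def VIAdj (G : SimpleGraph V) : VIElem G → VIElem G → Prop
  | Sum.inl u, Sum.inl w => G.Adj u w
  | Sum.inl u, Sum.inr i => u ∈ i.1.2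
  | Sum.inr i, Sum.inl u => u ∈ i.1.2
  | Sum.inr i, Sum.inr j => i ≠ j ∧
      (i.1.1 = j.1.1 ∨ i.1.2 = j.1.2 ∨ s(i.1.1, j.1.1) = i.1.2 ∨ s(i.1.1, j.1.1) = j.1.2)

/-- A vi-simultaneous proper `k`-coloring of `G`: adjacent or incident elements of
`V(G) ∪ I(G)` receive distinct colors. -/
def IsVIColoring (G : SimpleGraph V) {k : ℕ} (c : VIElem G → Fin k) : Prop :=
  ∀ a b, VIAdj G a b → c a ≠ c b

/-- The vi-simultaneous chromatic number `χ_vi(G)`: the least `k` admitting a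
vi-simultaneous proper `k`-coloring. -/
noncomputable def chiVI (G : SimpleGraph V) : ℕ :=
  sInf {k | ∃ c : VIElem G → Fin k, IsVIColoring G c}

/-- `I₂(v)`: the set of second incidences of a vertex `v`, i.e. incidences `(u, e)` with
`e = {u, v}` and `u ≠ v`. -/
def I2 (G : SimpleGraph V) (v : V) : Set (Inc G) :=
  {i | i.1.1 ≠ v ∧ i.1.2 = s(i.1.1, v)}

/-- A vi-simultaneous `(k, s)`-coloring: a vi-simultaneous proper `k`-coloring in which at
most `s` distinct colors appear on `I₂(v)` for every vertex `v`. -/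
def IsVISColoring (G : SimpleGraph V) (s : ℕ) {k : ℕ} (c : VIElem G → Fin k) : Prop :=
  IsVIColoring G c ∧ ∀ v : V, ((fun i => c (Sum.inr i)) '' I2 G v).ncard ≤ s

/-- `χ_{vi,s}(G)`: the least `k` admitting a vi-simultaneous `(k, s)`-coloring. -/
noncomputable def chiVIS (G : SimpleGraph V) (s : ℕ) : ℕ :=
  sInf {k | ∃ c : VIElem G → Fin k, IsVISColoring G s c}

/-- The maximum degree `Δ(G)` of a finite graph. -/
noncomputable def maxDeg [Fintype V] (G : SimpleGraph V) : ℕ :=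
  Finset.univ.sup fun v => (G.neighborSet v).ncard

section Aux

open scoped Fin.CommRing Fin.NatCast Fin.IntCast

variable {m : ℕ}

def Good (n k : ℕ) [NeZero n] (a f : Fin n → Fin k) : Prop :=
  (∀ v, a v ≠ a (v+1)) ∧ (∀ v, f v ≠ f (v+1)) ∧ (∀ v, f v ≠ f (v+2)) ∧
  (∀ v, a (v+1) ≠ f v ∧ a (v+1) ≠ f (v+1) ∧ a (v+1) ≠ f (v+2))

instance (n k : ℕ) [NeZero n] (a f : Fin n → Fin k) : Decidable (Good n k a f) := by
  unfold Good; infer_instance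

variable {m : ℕ}

lemma fin1ne : (1 : Fin (m+3)) ≠ 0 := by simp [Fin.ext_iff]
lemma fin2ne : (2 : Fin (m+3)) ≠ 0 := by
  simp [Fin.ext_iff, Nat.mod_eq_of_lt (show 2 < m+3 by omega)]

lemma inc_shape (i : Inc (cycleGraph (m+3))) :
    i.1.2 = s(i.1.1, i.1.1 + 1) ∨ i.1.2 = s(i.1.1, i.1.1 - 1) := by
  obtain ⟨⟨x, e⟩, he, hx⟩ := i
  induction e using Sym2.ind with
  | _ p q =>
    rw [SimpleGraph.mem_edgeSet, cycleGraph_adj] at he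
    have hx' : x = p ∨ x = q := by simpa using hx
    show s(p, q) = s(x, x + 1) ∨ s(p, q) = s(x, x - 1)
    rcases hx' with rfl | rfl
    · rcases he with h | h
      · right; rw [Sym2.eq_iff]; exact Or.inl ⟨rfl, by linear_combination -h⟩
      · left; rw [Sym2.eq_iff]; exact Or.inl ⟨rfl, by linear_combination h⟩
    · rcases he with h | h
      · left; rw [Sym2.eq_iff]; exact Or.inr ⟨by linear_combination h, rfl⟩
      · right; rw [Sym2.eq_iff]; exact Or.inr ⟨by linear_combination -h, rfl⟩

def mkCol {k : ℕ} (a f : Fin (m+3) → Fin k) : VIElem (cycleGraph (m+3)) → Fin k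
  | Sum.inl v => a v
  | Sum.inr i => if i.1.2 = s(i.1.1, i.1.1 + 1) then f (i.1.1 + 1) else f (i.1.1 - 1)

lemma sym2_pm_ne (x : Fin (m+3)) : s(x, x + 1) ≠ s(x, x - 1) := by
  intro heq
  rw [Sym2.eq_iff] at heq
  rcases heq with ⟨-, h⟩ | ⟨h, -⟩
  · exact fin2ne (by linear_combination h)
  · exact fin1ne (by linear_combination h)

/-- evaluation of `mkCol` on an incidence, given its shape -/
lemma mkCol_eval {k : ℕ} (a f : Fin (m+3) → Fin k) (i : Inc (cycleGraph (m+3))) :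
    ∃ u, (u = i.1.1 + 1 ∨ u = i.1.1 - 1) ∧ i.1.2 = s(i.1.1, u) ∧
      mkCol a f (Sum.inr i) = f u := by
  rcases inc_shape i with hE | hE
  · exact ⟨i.1.1 + 1, Or.inl rfl, hE, by simp [mkCol, hE]⟩
  · refine ⟨i.1.1 - 1, Or.inr rfl, hE, ?_⟩
    simp only [mkCol, hE]
    rw [if_neg fun h => sym2_pm_ne i.1.1 h.symm]

lemma good_to_coloring {k : ℕ} (a f : Fin (m+3) → Fin k) (h : Good (m+3) k a f) :
    IsVISColoring (cycleGraph (m+3)) 1 (mkCol a f) := by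
  obtain ⟨h1, h2, h3, h4⟩ := h
  have hA : ∀ x : Fin (m+3), a x ≠ f (x - 1) ∧ a x ≠ f x ∧ a x ≠ f (x + 1) := by
    intro x
    have := h4 (x - 1)
    rwa [show x - 1 + 1 = x by ring, show x - 1 + 2 = x + 1 by ring] at this
  have e21 : ∀ x : Fin (m+3), f (x - 1) ≠ f (x + 1) := by
    intro x
    have := h3 (x - 1)
    rwa [show x - 1 + 2 = x + 1 by ring] at this
  have efm : ∀ x : Fin (m+3), f x ≠ f (x - 1) := by
    intro x
    have := (h2 (x - 1)).symm
    rwa [show x - 1 + 1 = x by ring] at this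
  have hne_p : ∀ x : Fin (m+3), x ≠ x + 1 := fun x hx => fin1ne (by linear_combination -hx)
  have hne_m : ∀ x : Fin (m+3), x ≠ x - 1 := fun x hx => fin1ne (by linear_combination hx)
  have hvi : ∀ (u' : Fin (m+3)) (i : Inc (cycleGraph (m+3))), u' ∈ i.1.2 →
      mkCol a f (Sum.inl u') ≠ mkCol a f (Sum.inr i) := by
    intro u' i hmem
    obtain ⟨u, hu, hEu, hcu⟩ := mkCol_eval a f i
    rw [hcu]
    show a u' ≠ f u
    rw [hEu, Sym2.mem_iff] at hmem
    rcases hmem with rfl | rfl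
    · rcases hu with h | h <;> rw [h]
      · exact (hA i.1.1).2.2
      · exact (hA i.1.1).1
    · exact (hA u').2.1
  constructor
  · rintro (u' | i) (w' | j) hadj
    · have hadj' : (cycleGraph (m+3)).Adj u' w' := hadj
      rw [cycleGraph_adj] at hadj'
      show a u' ≠ a w'
      rcases hadj' with hd | hd
      · have hw : u' = w' + 1 := by linear_combination hd
        subst hw
        exact (h1 w').symm
      · have hw : w' = u' + 1 := by linear_combination hd
        subst hw
        exact h1 u'
    · exact hvi u' j hadj
    · exact fun hc => hvi w' i hadj hc.symm
    · obtain ⟨hne, hd⟩ := hadj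
      obtain ⟨⟨x, e⟩, hie, hix⟩ := i
      obtain ⟨⟨y, e'⟩, hje, hjy⟩ := j
      obtain ⟨u, hu, hEu, hcu⟩ := mkCol_eval a f ⟨(x, e), hie, hix⟩
      obtain ⟨w, hw, hEw, hcw⟩ := mkCol_eval a f ⟨(y, e'), hje, hjy⟩
      simp only at hEu hEw hd
      rw [hcu, hcw]
      have hij : x = y → e = e' → False := by
        intro hv he
        apply hne
        apply Subtype.ext
        exact Prod.ext hv he
      rcases hd with hxy | hee | hse | hse'
      · subst hxy
        have huw : u ≠ w := by
          rintro rfl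
          exact hij rfl (by rw [hEu, hEw])
        rcases hu with rfl | rfl <;> rcases hw with rfl | rfl
        · exact absurd rfl huw
        · exact (e21 x).symm
        · exact e21 x
        · exact absurd rfl huw
      · have h' := hee
        rw [hEu, hEw, Sym2.eq_iff] at h'
        rcases h' with ⟨hxy, rfl⟩ | ⟨rfl, rfl⟩
        · exact absurd hee (fun he => hij hxy he)
        · rcases hu with rfl | rfl
          · exact (h2 x).symm
          · exact (efm x).symm
      · rw [hEu, Sym2.eq_iff] at hse
        rcases hse with ⟨-, rfl⟩ | ⟨hxu, -⟩
        · rcases hw with rfl | rfl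
          · exact h2 y
          · exact efm y
        · rcases hu with rfl | rfl
          · exact absurd hxu (hne_p x)
          · exact absurd hxu (hne_m x)
      · rw [hEw, Sym2.eq_iff] at hse'
        rcases hse' with ⟨-, hyw⟩ | ⟨rfl, -⟩
        · rcases hw with rfl | rfl
          · exact absurd hyw (hne_p y)
          · exact absurd hyw (hne_m y)
        · rcases hu with rfl | rfl
          · exact (h2 x).symm
          · exact (efm x).symm
  · intro v
    have hsub : ((fun i => mkCol a f (Sum.inr i)) '' I2 (cycleGraph (m+3)) v) ⊆ {f v} := by
      rintro t ⟨i, ⟨hnev, hEd⟩, rfl⟩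
      obtain ⟨u, hu, hEu, hcu⟩ := mkCol_eval a f i
      have h' : s(i.1.1, u) = s(i.1.1, v) := hEu.symm.trans hEd
      rw [Sym2.eq_iff] at h'
      have huv : u = v := by
        rcases h' with ⟨-, huv⟩ | ⟨hxv, -⟩
        · exact huv
        · exact absurd hxv hnev
      simp only [Set.mem_singleton_iff]
      rw [hcu, huv]
    calc ((fun i => mkCol a f (Sum.inr i)) '' I2 (cycleGraph (m+3)) v).ncard
        ≤ ({f v} : Set (Fin k)).ncard := Set.ncard_le_ncard hsub (Set.finite_singleton _)
      _ = 1 := Set.ncard_singleton _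

lemma coloring_to_good {k : ℕ} (c : VIElem (cycleGraph (m+3)) → Fin k)
    (hc : IsVISColoring (cycleGraph (m+3)) 1 c) :
    ∃ a f : Fin (m+3) → Fin k, Good (m+3) k a f := by
  obtain ⟨hcol, hcard⟩ := hc
  have hedgeJ : ∀ v : Fin (m+3), s(v+1, v) ∈ (cycleGraph (m+3)).edgeSet := by
    intro v; rw [SimpleGraph.mem_edgeSet, cycleGraph_adj]; left; ring
  have hedgeL : ∀ v : Fin (m+3), s(v, v+1) ∈ (cycleGraph (m+3)).edgeSet := by
    intro v; rw [SimpleGraph.mem_edgeSet, cycleGraph_adj]; right; ring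
  set J : Fin (m+3) → Inc (cycleGraph (m+3)) :=
    fun v => ⟨(v+1, s(v+1, v)), hedgeJ v, by simp⟩ with hJ
  set L : Fin (m+3) → Inc (cycleGraph (m+3)) :=
    fun v => ⟨(v, s(v, v+1)), hedgeL v, by simp⟩ with hL
  have hne_p : ∀ x : Fin (m+3), x ≠ x + 1 := fun x hx => fin1ne (by linear_combination -hx)
  have hJI2 : ∀ v, J v ∈ I2 (cycleGraph (m+3)) v := by
    intro v
    exact ⟨(hne_p v).symm, rfl⟩
  have hLI2 : ∀ v, L v ∈ I2 (cycleGraph (m+3)) (v+1) := by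
    intro v
    exact ⟨hne_p v, rfl⟩
  set a : Fin (m+3) → Fin k := fun v => c (Sum.inl v) with ha
  set f : Fin (m+3) → Fin k := fun v => c (Sum.inr (J v)) with hf
  have hLval : ∀ v, c (Sum.inr (L v)) = f (v+1) := by
    intro v
    by_contra hnev
    have hsub : ({c (Sum.inr (L v)), c (Sum.inr (J (v+1)))} : Set (Fin k)) ⊆
        ((fun i => c (Sum.inr i)) '' I2 (cycleGraph (m+3)) (v+1)) := by
      rintro t (rfl | rfl)
      · exact ⟨L v, hLI2 v, rfl⟩
      · exact ⟨J (v+1), hJI2 (v+1), rfl⟩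
    have h2le : 2 ≤ ((fun i => c (Sum.inr i)) '' I2 (cycleGraph (m+3)) (v+1)).ncard := by
      have h2 := Set.ncard_le_ncard hsub (Set.toFinite _)
      rwa [Set.ncard_pair hnev] at h2
    have := hcard (v+1)
    omega
  -- adjacency helpers
  have adjJJ : ∀ v : Fin (m+3), VIAdj (cycleGraph (m+3)) (Sum.inr (J v)) (Sum.inr (J (v+1))) := by
    intro v
    constructor
    · intro hh
      have := congrArg (fun i => i.1.1) hh
      simp only [hJ] at this
      exact fin1ne (by linear_combination -this)
    · right; right; right
      show s(v+1, v+1+1) = s(v+1+1, v+1)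
      exact Sym2.eq_swap
  have adjJL : ∀ v : Fin (m+3), VIAdj (cycleGraph (m+3)) (Sum.inr (J v)) (Sum.inr (L (v+1))) := by
    intro v
    constructor
    · intro hh
      have := congrArg (fun i => i.1.2) hh
      simp only [hJ, hL] at this
      rw [Sym2.eq_iff] at this
      rcases this with ⟨-, hq⟩ | ⟨hq, -⟩
      · exact fin2ne (by linear_combination -hq)
      · exact fin1ne (by linear_combination -hq)
    · left; rfl
  refine ⟨a, f, ?_, ?_, ?_, ?_⟩
  · intro v
    apply hcol (Sum.inl v) (Sum.inl (v+1))
    show (cycleGraph (m+3)).Adj v (v+1)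
    rw [cycleGraph_adj]
    right; ring
  · intro v
    exact hcol _ _ (adjJJ v)
  · intro v
    have h1 := hcol _ _ (adjJL v)
    rw [hLval (v+1)] at h1
    rwa [show v+1+1 = v+2 by ring] at h1
  · refine fun v => ⟨?_, ?_, ?_⟩
    · have : VIAdj (cycleGraph (m+3)) (Sum.inl (v+1)) (Sum.inr (J v)) := by
        show (v+1) ∈ s(v+1, v)
        simp
      exact hcol _ _ this
    · have : VIAdj (cycleGraph (m+3)) (Sum.inl (v+1)) (Sum.inr (L v)) := by
        show (v+1) ∈ s(v, v+1)
        simp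
      have h1 := hcol _ _ this
      rwa [hLval v] at h1
    · have : VIAdj (cycleGraph (m+3)) (Sum.inl (v+1)) (Sum.inr (L (v+1))) := by
        show (v+1) ∈ s(v+1, v+1+1)
        simp
      have h1 := hcol _ _ this
      rw [hLval (v+1)] at h1
      rwa [show v+1+1 = v+2 by ring] at h1

lemma four_le_of_distinct {k : ℕ} (p q r x : Fin k) (hpq : p ≠ q) (hpr : p ≠ r)
    (hqr : q ≠ r) (hxp : x ≠ p) (hxq : x ≠ q) (hxr : x ≠ r) : 4 ≤ k := by
  have hpx : p ≠ x := fun h => hxp h.symm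
  have hqx : q ≠ x := fun h => hxq h.symm
  have hrx : r ≠ x := fun h => hxr h.symm
  have hcard : ({p, q, r, x} : Finset (Fin k)).card = 4 := by
    rw [Finset.card_insert_of_notMem (by simp_all), Finset.card_insert_of_notMem (by simp_all),
      Finset.card_insert_of_notMem (by simp_all), Finset.card_singleton]
  have hle := Finset.card_le_univ ({p, q, r, x} : Finset (Fin k))
  rw [hcard] at hle
  simpa using hle

lemma six_le_of_distinct {k : ℕ} (p q r x y z : Fin k)
    (h1 : p ≠ q) (h2 : p ≠ r) (h3 : q ≠ r) (h4 : x ≠ y) (h5 : x ≠ z) (h6 : y ≠ z)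
    (h7 : p ≠ x) (h8 : p ≠ y) (h9 : p ≠ z) (h10 : q ≠ x) (h11 : q ≠ y) (h12 : q ≠ z)
    (h13 : r ≠ x) (h14 : r ≠ y) (h15 : r ≠ z) : 6 ≤ k := by
  have hcard : ({p, q, r, x, y, z} : Finset (Fin k)).card = 6 := by
    rw [Finset.card_insert_of_notMem (by simp_all), Finset.card_insert_of_notMem (by simp_all),
      Finset.card_insert_of_notMem (by simp_all), Finset.card_insert_of_notMem (by simp_all),
      Finset.card_insert_of_notMem (by simp_all), Finset.card_singleton]
  have hle := Finset.card_le_univ ({p, q, r, x, y, z} : Finset (Fin k))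
  rw [hcard] at hle
  simpa using hle

lemma good_ge4 {k : ℕ} (a f : Fin (m+3) → Fin k) (h : Good (m+3) k a f) : 4 ≤ k := by
  obtain ⟨h1, h2, h3, h4⟩ := h
  obtain ⟨hx1, hx2, hx3⟩ := h4 0
  have hqr : f (0+1) ≠ f (0+2) := by
    have := h2 (0+1)
    rwa [show (0 : Fin (m+3))+1+1 = 0+2 by ring] at this
  exact four_le_of_distinct (f 0) (f (0+1)) (f (0+2)) (a (0+1)) (h2 0) (h3 0) hqr hx1 hx2 hx3

lemma good3_ge6 {k : ℕ} (a f : Fin 3 → Fin k) (h : Good 3 k a f) : 6 ≤ k := by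
  obtain ⟨h1, h2, h3, h4⟩ := h
  obtain ⟨hq1, hq2, hq3⟩ := h4 0
  obtain ⟨hr1, hr2, hr3⟩ := h4 1
  obtain ⟨hp1, hp2, hp3⟩ := h4 2
  exact six_le_of_distinct (a 0) (a 1) (a 2) (f 0) (f 1) (f 2)
    (h1 0) (h1 2).symm (h1 1) (h2 0) (h3 0) (h2 1)
    hp2 hp3 hp1 hq1 hq2 hq3 hr3 hr1 hr2

lemma uniq4 : ∀ p q r x y : Fin 4, p ≠ q → p ≠ r → q ≠ r → x ≠ p → x ≠ q → x ≠ r →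
    y ≠ p → y ≠ q → y ≠ r → x = y := by decide

lemma good_not4 (hnd : (m+3) % 4 ≠ 0) (a f : Fin (m+3) → Fin 4)
    (h : Good (m+3) 4 a f) : False := by
  obtain ⟨h1, h2, h3, h4⟩ := h
  have h2' : ∀ v w : Fin (m+3), w = v + 1 → f v ≠ f w := fun v w hw => hw ▸ h2 v
  have h3' : ∀ v w : Fin (m+3), w = v + 2 → f v ≠ f w := fun v w hw => hw ▸ h3 v
  have h5 : ∀ v, f (v+3) ≠ f v := by
    intro v heq
    obtain ⟨hx1, hx2, hx3⟩ := h4 v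
    obtain ⟨hy1, hy2, hy3⟩ := h4 (v+1)
    rw [show v+1+2 = v+3 by ring] at hy3
    rw [show v+1+1 = v+2 by ring] at hy1 hy2 hy3
    rw [heq] at hy3
    have key : a (v+1) = a (v+2) :=
      uniq4 (f v) (f (v+1)) (f (v+2)) _ _ (h2 v) (h3 v)
        (h2' (v+1) (v+2) (by ring)) hx1 hx2 hx3 hy3 hy1 hy2
    apply h1 (v+1)
    rw [show v+1+1 = v+2 by ring]
    exact key
  have hper : ∀ v, f (v+4) = f v := by
    intro v
    refine uniq4 (f (v+1)) (f (v+2)) (f (v+3)) (f (v+4)) (f v) (h2' (v+1) (v+2) (by ring))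
      (h3' (v+1) (v+3) (by ring)) (h2' (v+2) (v+3) (by ring)) ?_
      ((h3' (v+2) (v+4) (by ring)).symm) ((h2' (v+3) (v+4) (by ring)).symm)
      (h2 v) (h3 v) ((h5 v).symm)
    have := h5 (v+1)
    rwa [show v+1+3 = v+4 by ring] at this
  have hiter : ∀ (j : ℕ) (v : Fin (m+3)), f (v + ((4*j : ℕ) : Fin (m+3))) = f v := by
    intro j
    induction j with
    | zero => intro v; simp
    | succ j ih =>
        intro v
        have hcast : ((4*(j+1) : ℕ) : Fin (m+3)) = ((4*j : ℕ) : Fin (m+3)) + 4 := by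
          push_cast; ring
        rw [hcast, ← add_assoc, hper, ih]
  set t := (m+3)/4 with ht
  have hr : (m+3) % 4 = 1 ∨ (m+3) % 4 = 2 ∨ (m+3) % 4 = 3 := by omega
  rcases hr with hr | hr | hr
  · have hnat : 4*t + 1 = m+3 := by omega
    have hz : ((4*t : ℕ) : Fin (m+3)) + 1 = 0 := by
      have e : ((4*t + 1 : ℕ) : Fin (m+3)) = ((4*t : ℕ) : Fin (m+3)) + 1 := by
        push_cast; ring
      rw [← e, hnat]
      exact Fin.natCast_self _
    have hit := hiter t 1
    rw [show (1 : Fin (m+3)) + ((4*t : ℕ) : Fin (m+3)) = 0 by linear_combination hz] at hit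
    exact h2' 0 1 (by ring) hit
  · have hnat : 4*t + 2 = m+3 := by omega
    have hz : ((4*t : ℕ) : Fin (m+3)) + 2 = 0 := by
      have e : ((4*t + 2 : ℕ) : Fin (m+3)) = ((4*t : ℕ) : Fin (m+3)) + 2 := by
        push_cast; ring
      rw [← e, hnat]
      exact Fin.natCast_self _
    have hit := hiter t 2
    rw [show (2 : Fin (m+3)) + ((4*t : ℕ) : Fin (m+3)) = 0 by linear_combination hz] at hit
    exact h3' 0 2 (by ring) hit
  · have hnat : 4*(t+1) = (m+3) + 1 := by omega
    have hz : ((4*(t+1) : ℕ) : Fin (m+3)) = 1 := by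
      have e : ((4*(t+1) : ℕ) : Fin (m+3)) = (((m+3) : ℕ) : Fin (m+3)) + 1 := by
        rw [hnat]; push_cast; ring
      rw [e, Fin.natCast_self, zero_add]
    have hit := hiter (t+1) 0
    rw [hz, zero_add] at hit
    exact h2' 0 (0+1) rfl (by rw [show (0 : Fin (m+3)) + 1 = 1 by ring]; exact hit.symm)

lemma window_good {k : ℕ} (f : Fin (m+3) → Fin k)
    (hw : ∀ v, f v ≠ f (v+1) ∧ f v ≠ f (v+2) ∧ f v ≠ f (v+3)) :
    Good (m+3) k (fun v => f (v+2)) f := by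
  refine ⟨?_, fun v => (hw v).1, fun v => (hw v).2.1, ?_⟩
  · intro v
    show f (v+2) ≠ f (v+1+2)
    have := (hw (v+2)).1
    rwa [show v+2+1 = v+1+2 by ring] at this
  · intro v
    refine ⟨?_, ?_, ?_⟩ <;> show f (v+1+2) ≠ _
    · have := ((hw v).2.2).symm
      rwa [show v+3 = v+1+2 by ring] at this
    · exact ((hw (v+1)).2.1).symm
    · have := ((hw (v+2)).1).symm
      rwa [show v+2+1 = v+1+2 by ring] at this

def Fdef (n i : ℕ) : ℕ := if i < n - 5 * (n % 4) then i % 4 else (i - (n - 5 * (n % 4))) % 5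

lemma Fdef_lt (n i : ℕ) : Fdef n i < 5 := by unfold Fdef; split <;> omega

lemma Fdef_window (n i i' : ℕ) (hub : 5 * (n % 4) ≤ n) (hr : n % 4 ≠ 0) (hi : i < n) (hi' : i' < n)
    (h : i' + n = i + 1 ∨ i' + n = i + 2 ∨ i' + n = i + 3 ∨ i' = i + 1 ∨ i' = i + 2 ∨ i' = i + 3) :
    Fdef n i ≠ Fdef n i' := by
  have hdvd : 4 ∣ (n - 5 * (n % 4)) := by omega
  unfold Fdef
  split_ifs <;> omega

lemma lift_window {k : ℕ} (hm : 1 ≤ m) (F : ℕ → ℕ) (hFk : ∀ i, F i < k)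
    (hW : ∀ i i', i < m+3 → i' < m+3 →
      (i' + (m+3) = i + 1 ∨ i' + (m+3) = i + 2 ∨ i' + (m+3) = i + 3 ∨
        i' = i + 1 ∨ i' = i + 2 ∨ i' = i + 3) →
      F i ≠ F i') :
    ∀ v : Fin (m+3), (fun w : Fin (m+3) => (⟨F w.val, hFk w.val⟩ : Fin k)) v ≠
        (fun w : Fin (m+3) => (⟨F w.val, hFk w.val⟩ : Fin k)) (v+1) ∧
      (fun w : Fin (m+3) => (⟨F w.val, hFk w.val⟩ : Fin k)) v ≠
        (fun w : Fin (m+3) => (⟨F w.val, hFk w.val⟩ : Fin k)) (v+2) ∧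
      (fun w : Fin (m+3) => (⟨F w.val, hFk w.val⟩ : Fin k)) v ≠
        (fun w : Fin (m+3) => (⟨F w.val, hFk w.val⟩ : Fin k)) (v+3) := by
  intro v
  have hv := v.isLt
  have v1 : ((1 : Fin (m+3))).val = 1 := Fin.val_one _
  have v2 : ((2 : Fin (m+3))).val = 2 := by
    show 2 % (m+3) = 2; exact Nat.mod_eq_of_lt (by omega)
  have v3 : ((3 : Fin (m+3))).val = 3 := by
    show 3 % (m+3) = 3; exact Nat.mod_eq_of_lt (by omega)
  have key : ∀ j : ℕ, 0 < j → j ≤ 3 → F v.val ≠ F ((v.val + j) % (m+3)) := by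
    intro j hj0 hj3
    have hlt : (v.val + j) % (m+3) < m+3 := Nat.mod_lt _ (by omega)
    apply hW _ _ hv hlt
    rcases Nat.lt_or_ge (v.val + j) (m+3) with hc | hc
    · rw [Nat.mod_eq_of_lt hc]; omega
    · have he : (v.val + j) % (m+3) = v.val + j - (m+3) := by
        rw [Nat.mod_eq_sub_mod hc, Nat.mod_eq_of_lt (by omega)]
      omega
  refine ⟨?_, ?_, ?_⟩ <;> simp only [Ne, Fin.mk.injEq]
  · rw [Fin.val_add, v1]; exact key 1 (by omega) (by omega)
  · rw [Fin.val_add, v2]; exact key 2 (by omega) (by omega)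
  · rw [Fin.val_add, v3]; exact key 3 (by omega) (by omega)

lemma good_mod4 (hm : 1 ≤ m) (h4 : (m+3) % 4 = 0) :
    ∃ a f : Fin (m+3) → Fin 4, Good (m+3) 4 a f := by
  have hFk : ∀ i, i % 4 < 4 := fun i => Nat.mod_lt _ (by omega)
  have hW : ∀ i i', i < m+3 → i' < m+3 →
      (i' + (m+3) = i + 1 ∨ i' + (m+3) = i + 2 ∨ i' + (m+3) = i + 3 ∨
        i' = i + 1 ∨ i' = i + 2 ∨ i' = i + 3) →
      i % 4 ≠ i' % 4 := by
    intro i i' hi hi' hd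
    omega
  exact ⟨_, _, window_good (fun w => ⟨w.val % 4, hFk w.val⟩)
    (lift_window hm (fun i => i % 4) hFk hW)⟩

lemma good_mod5 (hm : 1 ≤ m) (hub : 5 * ((m+3) % 4) ≤ m+3) (hr : (m+3) % 4 ≠ 0) :
    ∃ a f : Fin (m+3) → Fin 5, Good (m+3) 5 a f := by
  have hFk : ∀ i, Fdef (m+3) i < 5 := fun i => Fdef_lt _ _
  exact ⟨_, _, window_good (fun w => ⟨Fdef (m+3) w.val, hFk w.val⟩)
    (lift_window hm (Fdef (m+3)) hFk
      (fun i i' hi hi' hd => Fdef_window (m+3) i i' hub hr hi hi' hd))⟩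


end Aux

/-- For the cycle `C_n` on `n ≥ 3` vertices: `χ_{vi,1}(C_3) = 6`;
`χ_{vi,1}(C_n) = 4` if `4 ∣ n`; and `χ_{vi,1}(C_n) = 5` otherwise. -/
theorem chiVIS_one_cycle (n : ℕ) (hn : 3 ≤ n) :
    chiVIS (SimpleGraph.cycleGraph n) 1 =
      if n = 3 then 6 else if n % 4 = 0 then 4 else 5 := by
  obtain ⟨m, rfl⟩ : ∃ m, n = m + 3 := ⟨n - 3, by omega⟩
  have main : ∀ t : ℕ,
      (∃ a f : Fin (m+3) → Fin t, Good (m+3) t a f) →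
      (∀ (k : ℕ) (a f : Fin (m+3) → Fin k), Good (m+3) k a f → t ≤ k) →
      chiVIS (cycleGraph (m+3)) 1 = t := by
    intro t ⟨a, f, hg⟩ hlb
    have hmem : t ∈ {k | ∃ c : VIElem (cycleGraph (m+3)) → Fin k,
        IsVISColoring (cycleGraph (m+3)) 1 c} := ⟨mkCol a f, good_to_coloring a f hg⟩
    refine le_antisymm (Nat.sInf_le hmem) (le_csInf ⟨t, hmem⟩ ?_)
    rintro k ⟨c, hc⟩
    obtain ⟨a', f', hg'⟩ := coloring_to_good c hc
    exact hlb k a' f' hg'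
  split_ifs with h3 h4
  · obtain rfl : m = 0 := by omega
    refine main 6 ⟨![0,1,2], ![3,4,5], by decide⟩ ?_
    intro k a f hg
    exact good3_ge6 a f hg
  · refine main 4 (good_mod4 (by omega) h4) ?_
    intro k a f hg
    exact good_ge4 a f hg
  · refine main 5 ?_ ?_
    · by_cases h6 : m + 3 = 6
      · obtain rfl : m = 3 := by omega
        exact ⟨![4,2,4,1,0,1], ![0,1,3,2,4,3], by decide⟩
      · by_cases h7 : m + 3 = 7
        · obtain rfl : m = 4 := by omega
          exact ⟨![2,3,4,0,1,0,1], ![0,1,2,3,4,2,3], by decide⟩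
        · by_cases h11 : m + 3 = 11
          · obtain rfl : m = 8 := by omega
            exact ⟨![2,3,0,1,2,3,4,0,1,0,1], ![0,1,2,3,0,1,2,3,4,2,3], by decide⟩
          · exact good_mod5 (by omega) (by omega) h4
    · intro k a f hg
      have h4le : 4 ≤ k := good_ge4 a f hg
      rcases Nat.eq_or_lt_of_le h4le with heq | hlt
      · exfalso
        subst heq
        exact good_not4 h4 a f hg
      · exact hlt
end

section
/- For every integer n ≥ 2, the complete graph K_n satisfies χ_vi(K_n) = n + 2. -/
open SimpleGraph

variable {V : Type*}

section Aux

variable {n : ℕ}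

/-- Build an incidence of the complete graph. -/
def mkInc (n : ℕ) (u v : Fin n) (h : u ≠ v) : Inc (⊤ : SimpleGraph (Fin n)) :=
  ⟨(u, s(u, v)), by simpa using h, Sym2.mem_mk_left u v⟩

lemma mkInc_ne_of_fst {u v w x : Fin n} {h : u ≠ v} {h' : w ≠ x} (huw : u ≠ w) :
    mkInc n u v h ≠ mkInc n w x h' := fun he => huw (congrArg (fun i => i.1.1) he)

lemma pigeon {n : ℕ} (φ : Fin n → Fin (n+1)) (hφ : Function.Injective φ)
    {a b : Fin (n+1)} (ha : ∀ x, a ≠ φ x) (hb : ∀ x, b ≠ φ x) : a = b := by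
  by_contra hab
  have h1 : (insert a (insert b (Finset.univ.image φ))).card ≤ Fintype.card (Fin (n+1)) :=
    Finset.card_le_univ _
  rw [Finset.card_insert_of_notMem (by
        simp only [Finset.mem_insert, Finset.mem_image]
        push_neg
        exact ⟨hab, fun x _ hx => ha x hx.symm⟩),
      Finset.card_insert_of_notMem (by
        simp only [Finset.mem_image]
        push_neg
        exact fun x _ hx => hb x hx.symm),
      Finset.card_image_of_injective _ hφ] at h1
  simp at h1

end Aux


section Upper

variable {n : ℕ}

/-- Color of the incidence `(u, {u,v})`. -/
def Fc (n : ℕ) (u v : Fin n) : Fin (n+2) :=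
  if (u:ℕ) = (v:ℕ)+1 then (if (v:ℕ) % 2 = 0 then ⟨n+1, by omega⟩ else ⟨n, by omega⟩)
  else ⟨v, by omega⟩

/-- Color of the vertex `v`. -/
def Vc (n : ℕ) (v : Fin n) : Fin (n+2) :=
  if (v:ℕ) = 0 then ⟨n, by omega⟩ else ⟨(v:ℕ)-1, by omega⟩

lemma Vc_inj {u v : Fin n} (h : u ≠ v) : Vc n u ≠ Vc n v := by
  have h' : (u:ℕ) ≠ (v:ℕ) := fun hh => h (Fin.ext hh)
  have hu := u.isLt; have hv := v.isLt
  unfold Vc; split_ifs <;> simp only [ne_eq, Fin.mk.injEq] <;> omega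

lemma Vc_ne_Fc {w u v : Fin n} (huv : u ≠ v) (hw : w = u ∨ w = v) :
    Vc n w ≠ Fc n u v := by
  have h1 : (u:ℕ) ≠ (v:ℕ) := fun hh => huv (Fin.ext hh)
  have h2 : (w:ℕ) = u ∨ (w:ℕ) = v := by rcases hw with h|h <;> [left; right] <;> rw [h]
  have hu := u.isLt; have hv := v.isLt; have hww := w.isLt
  unfold Vc Fc; split_ifs <;> simp only [ne_eq, Fin.mk.injEq] <;> omega

lemma Fc_ne_Fc {u v w x : Fin n} (huv : u ≠ v) (hwx : w ≠ x)
    (hne : ¬(u = w ∧ v = x)) (hconf : u = w ∨ v = w ∨ x = u) :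
    Fc n u v ≠ Fc n w x := by
  have h1 : (u:ℕ) ≠ (v:ℕ) := fun hh => huv (Fin.ext hh)
  have h2 : (w:ℕ) ≠ (x:ℕ) := fun hh => hwx (Fin.ext hh)
  have h3 : ¬((u:ℕ) = w ∧ (v:ℕ) = x) := fun ⟨a,b⟩ => hne ⟨Fin.ext a, Fin.ext b⟩
  have h4 : (u:ℕ) = w ∨ (v:ℕ) = w ∨ (x:ℕ) = u := by
    rcases hconf with h|h|h <;> [left; (right;left); (right;right)] <;> rw [h]
  have hu := u.isLt; have hv := v.isLt; have hww := w.isLt; have hx := x.isLt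
  unfold Fc; split_ifs <;> simp only [ne_eq, Fin.mk.injEq] <;> omega

end Upper


section Coloring

variable {n : ℕ}

/-- The second endpoint of an incidence. -/
def otherV (i : Inc (⊤ : SimpleGraph (Fin n))) : Fin n := Sym2.Mem.other' i.2.2

lemma other_spec (i : Inc (⊤ : SimpleGraph (Fin n))) : i.1.2 = s(i.1.1, otherV i) :=
  (Sym2.other_spec' i.2.2).symm

lemma fst_ne_other (i : Inc (⊤ : SimpleGraph (Fin n))) : i.1.1 ≠ otherV i := by
  have h := i.2.1
  rw [other_spec i] at h
  simpa using h

lemma inc_eq {i j : Inc (⊤ : SimpleGraph (Fin n))} (h1 : i.1.1 = j.1.1)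
    (h2 : otherV i = otherV j) : i = j := by
  apply Subtype.ext
  have := other_spec i
  have := other_spec j
  apply Prod.ext h1
  rw [other_spec i, other_spec j, h1, h2]

/-- The explicit good coloring with `n+2` colors. -/
def goodC (n : ℕ) : VIElem (⊤ : SimpleGraph (Fin n)) → Fin (n+2)
  | Sum.inl v => Vc n v
  | Sum.inr i => Fc n i.1.1 (otherV i)

lemma goodC_is : IsVIColoring (⊤ : SimpleGraph (Fin n)) (goodC n) := by
  rintro (u | i) (w | j) hadj
  · exact Vc_inj (by simpa [VIAdj] using hadj)
  · have hm : u ∈ j.1.2 := hadj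
    rw [other_spec j, Sym2.mem_iff] at hm
    exact Vc_ne_Fc (fst_ne_other j) hm
  · have hm : w ∈ i.1.2 := hadj
    rw [other_spec i, Sym2.mem_iff] at hm
    exact (Vc_ne_Fc (fst_ne_other i) hm).symm
  · obtain ⟨hne, hd⟩ := hadj
    have hne3 : ¬(i.1.1 = j.1.1 ∧ otherV i = otherV j) := fun ⟨a, b⟩ => hne (inc_eq a b)
    rw [other_spec i, other_spec j] at hd
    have hconf : i.1.1 = j.1.1 ∨ otherV i = j.1.1 ∨ otherV j = i.1.1 := by
      rcases hd with h | h | h | h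
      · exact Or.inl h
      · rw [Sym2.eq_iff] at h
        rcases h with ⟨a, b⟩ | ⟨a, b⟩
        · exact absurd ⟨a, b⟩ hne3
        · exact Or.inr (Or.inl b)
      · rw [Sym2.eq_iff] at h
        rcases h with ⟨a, b⟩ | ⟨a, b⟩
        · exact Or.inr (Or.inl b.symm)
        · exact absurd a (fst_ne_other i)
      · rw [Sym2.eq_iff] at h
        rcases h with ⟨a, b⟩ | ⟨a, b⟩
        · exact absurd b (fst_ne_other j)
        · exact Or.inr (Or.inr a.symm)
    exact Fc_ne_Fc (fst_ne_other i) (fst_ne_other j) hne3 hconf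

end Coloring


section Lower

variable {n : ℕ}

lemma adj_vertex_mkInc {u v : Fin n} (w : Fin n) (h : u ≠ v) (hw : w = u ∨ w = v) :
    VIAdj (⊤ : SimpleGraph (Fin n)) (Sum.inl w) (Sum.inr (mkInc n u v h)) := by
  show w ∈ s(u, v)
  rw [Sym2.mem_iff]
  exact hw

lemma adj_mk_samefst {v x y : Fin n} (hx : v ≠ x) (hy : v ≠ y) (hxy : x ≠ y) :
    VIAdj (⊤ : SimpleGraph (Fin n)) (Sum.inr (mkInc n v x hx)) (Sum.inr (mkInc n v y hy)) := by
  refine ⟨fun he => ?_, Or.inl rfl⟩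
  have h2 : s(v, x) = s(v, y) := congrArg (fun i => i.1.2) he
  rw [Sym2.eq_iff] at h2
  rcases h2 with ⟨_, h3⟩ | ⟨h3, _⟩
  · exact hxy h3
  · exact hy h3

lemma adj_mk_key {u v x : Fin n} (hu : u ≠ v) (hvx : v ≠ x) :
    VIAdj (⊤ : SimpleGraph (Fin n)) (Sum.inr (mkInc n u v hu)) (Sum.inr (mkInc n v x hvx)) :=
  ⟨mkInc_ne_of_fst hu, Or.inr (Or.inr (Or.inl rfl))⟩

lemma adj_mk_swap {u v : Fin n} (h : u ≠ v) :
    VIAdj (⊤ : SimpleGraph (Fin n)) (Sum.inr (mkInc n u v h)) (Sum.inr (mkInc n v u h.symm)) :=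
  ⟨mkInc_ne_of_fst h, Or.inr (Or.inl Sym2.eq_swap)⟩

lemma no_col (hn : 2 ≤ n) (c : VIElem (⊤ : SimpleGraph (Fin n)) → Fin (n+1))
    (hc : IsVIColoring (⊤ : SimpleGraph (Fin n)) c) : False := by
  classical
  set φ : Fin n → Fin n → Fin (n+1) :=
    fun v x => if h : x = v then c (Sum.inl v) else c (Sum.inr (mkInc n v x (Ne.symm h)))
    with hφ
  have φinj : ∀ v, Function.Injective (φ v) := by
    intro v x y h
    by_contra hne
    rw [hφ] at h
    simp only at h
    split_ifs at h with h1 h2 h2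
    · exact hne (h1.trans h2.symm)
    · exact hc _ _ (adj_vertex_mkInc v (Ne.symm h2) (Or.inl rfl)) h
    · exact hc _ _ (adj_vertex_mkInc v (Ne.symm h1) (Or.inl rfl)) h.symm
    · exact hc _ _ (adj_mk_samefst (Ne.symm h1) (Ne.symm h2) hne) h
  have key : ∀ (u v : Fin n) (h : u ≠ v) (x : Fin n),
      c (Sum.inr (mkInc n u v h)) ≠ φ v x := by
    intro u v h x
    rw [hφ]
    simp only
    split_ifs with h1
    · exact fun he => hc _ _ (adj_vertex_mkInc v h (Or.inr rfl)) he.symm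
    · exact hc _ _ (adj_mk_key h (Ne.symm h1))
  have h1n : (1 : ℕ) < n := by omega
  have h0n : (0 : ℕ) < n := by omega
  set pick : Fin n → Fin n := fun v => if v = ⟨0, h0n⟩ then ⟨1, h1n⟩ else ⟨0, h0n⟩ with hpick
  have pick_ne : ∀ v, pick v ≠ v := by
    intro v
    rw [hpick]
    simp only
    split_ifs with h1
    · rw [h1]; simp [Fin.ext_iff]
    · exact fun e => h1 e.symm
  set f : Fin n → Fin (n+1) := fun v => c (Sum.inr (mkInc n (pick v) v (pick_ne v))) with hfdef
  have hf : ∀ (u v : Fin n) (h : u ≠ v), c (Sum.inr (mkInc n u v h)) = f v :=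
    fun u v h => pigeon (φ v) (φinj v) (key u v h) (key (pick v) v (pick_ne v))
  have finj : Function.Injective f := by
    intro u v he
    by_contra hne
    have h1 : c (Sum.inr (mkInc n u v hne)) = f v := hf u v hne
    have h2 : c (Sum.inr (mkInc n v u (Ne.symm hne))) = f u := hf v u (Ne.symm hne)
    exact hc _ _ (adj_mk_swap hne) (h1.trans (he.symm.trans h2.symm))
  have hvf : ∀ w x : Fin n, c (Sum.inl w) ≠ f x := by
    intro w x
    by_cases hwx : w = x
    · subst hwx
      exact hc _ _ (adj_vertex_mkInc w (pick_ne w) (Or.inr rfl))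
    · rw [← hf w x hwx]
      exact hc _ _ (adj_vertex_mkInc w hwx (Or.inl rfl))
  have h01 : c (Sum.inl (⟨0, h0n⟩ : Fin n)) = c (Sum.inl (⟨1, h1n⟩ : Fin n)) :=
    pigeon f finj (hvf _) (hvf _)
  exact hc _ _ (by simp [VIAdj, Fin.ext_iff] : VIAdj (⊤ : SimpleGraph (Fin n))
    (Sum.inl (⟨0, h0n⟩ : Fin n)) (Sum.inl (⟨1, h1n⟩ : Fin n))) h01

end Lower

/-- For every integer `n ≥ 2`, the complete graph `K_n` satisfies
`χ_vi(K_n) = n + 2`. -/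
theorem chiVI_completeGraph (n : ℕ) (hn : 2 ≤ n) :
    chiVI (⊤ : SimpleGraph (Fin n)) = n + 2 := by
  have hmem : n + 2 ∈ {k | ∃ c : VIElem (⊤ : SimpleGraph (Fin n)) → Fin k,
      IsVIColoring ⊤ c} := ⟨goodC n, goodC_is⟩
  refine le_antisymm (Nat.sInf_le hmem) (le_csInf ⟨_, hmem⟩ ?_)
  rintro k ⟨c, hc⟩
  by_contra hlt
  push_neg at hlt
  have hle : k ≤ n + 1 := by omega
  have hc' : IsVIColoring (⊤ : SimpleGraph (Fin n)) (fun a => Fin.castLE hle (c a)) :=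
    fun a b h he => hc a b h (Fin.castLE_injective hle he)
  exact no_col hn _ hc'
end
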